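/- arXiv:2503.13350 — 4 statements merged into one kernel-verified Lean document; each statement's English description precedes it below -/
import Mathlib

section
/- The quotient of the set P = {(A, B) ∈ SU(2) × SU(2) : A*B*A⁻¹*B⁻¹ = -1} by the simultaneous conjugation action of SU(2) has exactly one element; that is, P is nonempty and any two elements of P lie in the same conjugation orbit. (This is the paper's assertion that the genus-1 odd character variety M₁ consists of a single point.) -/
open Matrix Complex

/-- `SU2` is the special unitary group of 2×2 complex matrices of determinant 1. -/
abbrev SU2 := Matrix.specialUnitaryGroup (Fin 2) ℂ

/-- The group structure on the special unitary group, with inverse given by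
the conjugate transpose. -/
noncomputable instance instGroupSUC (n : ℕ) : Group (Matrix.specialUnitaryGroup (Fin n) ℂ) where
  inv A := ⟨star A.1, by
    obtain ⟨hu, hd⟩ := Matrix.mem_specialUnitaryGroup_iff.mp A.2
    refine Matrix.mem_specialUnitaryGroup_iff.mpr ⟨Unitary.star_mem hu, ?_⟩
    rw [Matrix.star_eq_conjTranspose, Matrix.det_conjTranspose, hd, star_one]⟩
  inv_mul_cancel A :=
    Subtype.ext (Unitary.star_mul_self_of_mem (Matrix.mem_specialUnitaryGroup_iff.mp A.2).1)

/-- The element `-1` of `SU(2)`. -/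
noncomputable def negOne : SU2 := ⟨-1, by
  refine Matrix.mem_specialUnitaryGroup_iff.mpr ⟨⟨?_, ?_⟩, ?_⟩ <;>
    simp [Matrix.det_neg]⟩

local notation "conj'" => starRingEnd ℂ

section helpers

lemma star_fin_two (x y z w : ℂ) :
    star !![x, y; z, w] = !![conj' x, conj' z; conj' y, conj' w] := by
  ext i j
  fin_cases i <;> fin_cases j <;> simp [Matrix.conjTranspose_apply]

lemma smul_one_fin_two (c : ℂ) : c • (1 : Matrix (Fin 2) (Fin 2) ℂ) = !![c, 0; 0, c] := by
  ext i j
  fin_cases i <;> fin_cases j <;> simp [Matrix.one_apply]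

lemma fin_two_eq {x y z w x' y' z' w' : ℂ} (h1 : x = x') (h2 : y = y') (h3 : z = z')
    (h4 : w = w') : !![x, y; z, w] = !![x', y'; z', w'] := by
  subst h1 h2 h3 h4; rfl

lemma mem_SU2 (M : Matrix (Fin 2) (Fin 2) ℂ) (h1 : star M * M = 1) (h2 : M.det = 1) :
    M ∈ Matrix.specialUnitaryGroup (Fin 2) ℂ :=
  Matrix.mem_specialUnitaryGroup_iff.mpr ⟨Matrix.mem_unitaryGroup_iff'.mpr h1, h2⟩

end helpers

section core
variable (a b p q : ℂ)

noncomputable def Mm : Matrix (Fin 2) (Fin 2) ℂ :=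
  !![-(a+I), -(p*(a+I)) + q * conj' b; conj' b, (a+I) * conj' q - p * conj' b]

variable
  (ha : conj' a = -a) (hp : conj' p = -p)
  (e1 : b * conj' b = 1 + a^2) (e2 : q * conj' q = 1 + p^2)
  (e3 : 2*a*p = b * conj' q + q * conj' b)

include ha hp e1 e2 e3 in
lemma core1 : star (Mm a b p q) * Mm a b p q = (2 - 2*I*a) • 1 := by
  rw [Mm, star_fin_two, Matrix.mul_fin_two, smul_one_fin_two]
  simp only [map_add, map_neg, map_sub, RingHom.map_mul, Complex.conj_conj, Complex.conj_I, ha, hp]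
  apply fin_two_eq
  · linear_combination e1 - Complex.I_sq
  · linear_combination (-p)*e1 - (a+I)*e3 - p*Complex.I_sq
  · linear_combination p*e1 + (a+I)*e3 + p*Complex.I_sq
  · linear_combination (q * conj' q - p^2)*e1 + (2-2*I*a)*e2 + (p^2 - q*conj' q)*Complex.I_sq

include e1 e3 in
lemma core2 : !![a, b; -conj' b, -a] * Mm a b p q = Mm a b p q * !![I, 0; 0, -I] := by
  rw [Mm, Matrix.mul_fin_two, Matrix.mul_fin_two]
  apply fin_two_eq
  · linear_combination e1 + Complex.I_sq
  · linear_combination (-p)*e1 - (a+I)*e3 - p*Complex.I_sq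
  · ring
  · linear_combination (conj' q)*e1 + (conj' b)*e3 + (conj' q)*Complex.I_sq

include e2 in
lemma core3 : !![p, q; -conj' q, -p] * Mm a b p q = Mm a b p q * !![0, -1; 1, 0] := by
  rw [Mm, Matrix.mul_fin_two, Matrix.mul_fin_two]
  apply fin_two_eq
  · ring
  · linear_combination (a+I)*e2
  · ring
  · linear_combination (-conj' b)*e2

end core

section su2facts

noncomputable def A0 : SU2 := ⟨!![I, 0; 0, -I], by
  apply mem_SU2
  · rw [star_fin_two, Matrix.mul_fin_two]
    ext i j
    fin_cases i <;> fin_cases j <;> simp [Matrix.one_apply]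
  · simp [Matrix.det_fin_two]⟩

noncomputable def B0 : SU2 := ⟨!![0, -1; 1, 0], by
  apply mem_SU2
  · rw [star_fin_two, Matrix.mul_fin_two]
    ext i j
    fin_cases i <;> fin_cases j <;> simp [Matrix.one_apply]
  · simp [Matrix.det_fin_two]⟩

lemma coe_mul (x y : SU2) : (x * y).1 = x.1 * y.1 := rfl

lemma inv_val (g : SU2) : (g⁻¹).1 = star g.1 := rfl

lemma star_mul_self' (g : SU2) : star g.1 * g.1 = 1 :=
  Matrix.mem_unitaryGroup_iff'.mp (Matrix.mem_specialUnitaryGroup_iff.mp g.2).1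

lemma mul_star_self' (g : SU2) : g.1 * star g.1 = 1 :=
  Matrix.mem_unitaryGroup_iff.mp (Matrix.mem_specialUnitaryGroup_iff.mp g.2).1

lemma det_one' (g : SU2) : g.1.det = 1 :=
  (Matrix.mem_specialUnitaryGroup_iff.mp g.2).2

/-- structure of SU2 matrices -/
lemma SU2_entries (A : SU2) :
    A.1 = !![A.1 0 0, A.1 0 1; -conj' (A.1 0 1), conj' (A.1 0 0)] := by
  have hadj : star A.1 = A.1.adjugate := by
    have h4 : A.1 * A.1.adjugate = 1 := by
      rw [Matrix.mul_adjugate, det_one', one_smul]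
    calc star A.1 = star A.1 * (A.1 * A.1.adjugate) := by rw [h4, mul_one]
    _ = (star A.1 * A.1) * A.1.adjugate := by rw [mul_assoc]
    _ = A.1.adjugate := by rw [star_mul_self', one_mul]
  have h10 : conj' (A.1 1 0) = - A.1 0 1 := by
    have := congrFun (congrFun hadj 0) 1
    simpa [Matrix.adjugate_fin_two, Matrix.conjTranspose_apply] using this
  have h11 : conj' (A.1 1 1) = A.1 0 0 := by
    have := congrFun (congrFun hadj 1) 1
    simpa [Matrix.adjugate_fin_two, Matrix.conjTranspose_apply] using this
  have h10' : A.1 1 0 = -conj' (A.1 0 1) := by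
    simpa using congrArg conj' h10
  have h11' : A.1 1 1 = conj' (A.1 0 0) := by
    simpa using congrArg conj' h11
  conv_lhs => rw [Matrix.eta_fin_two A.1]
  rw [h10', h11']

/-- anticommutation from the relation -/
lemma anticomm {A B : SU2} (h : A * B * A⁻¹ * B⁻¹ = negOne) :
    A.1 * B.1 = -(B.1 * A.1) := by
  have h2 : A * B = negOne * (B * A) := by
    rw [← h]; group
  have h3 := congrArg Subtype.val h2
  rw [coe_mul, coe_mul, coe_mul] at h3
  rw [h3]
  show (negOne).1 * _ = _
  rw [show (negOne).1 = -1 from rfl]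
  rw [neg_one_mul]

lemma trace_zero_of_anticomm {A B : SU2} (hm : A.1 * B.1 = -(B.1 * A.1)) :
    A.1.trace = 0 := by
  have h5 : A.1 = -(B.1 * A.1 * star B.1) := by
    calc A.1 = A.1 * (B.1 * star B.1) := by rw [mul_star_self', mul_one]
    _ = (A.1 * B.1) * star B.1 := by rw [mul_assoc]
    _ = -(B.1 * A.1) * star B.1 := by rw [hm]
    _ = -(B.1 * A.1 * star B.1) := by rw [neg_mul]
  have h6 : (B.1 * A.1 * star B.1).trace = A.1.trace := by
    rw [Matrix.trace_mul_cycle, star_mul_self', one_mul]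
  have h7 : A.1.trace = -(A.1.trace) := by
    conv_lhs => rw [h5]
    rw [Matrix.trace_neg, h6]
  exact add_self_eq_zero.mp (by linear_combination h7)
  
end su2facts

section main

lemma conj_to_std {A B : SU2} (h : A * B * A⁻¹ * B⁻¹ = negOne) (hne : A.1 0 0 ≠ -I) :
    ∃ g : SU2, g * A * g⁻¹ = A0 ∧ g * B * g⁻¹ = B0 := by
  set a := A.1 0 0 with ha_def
  set b := A.1 0 1 with hb_def
  set p := B.1 0 0 with hp_def
  set q := B.1 0 1 with hq_def
  have hm : A.1 * B.1 = -(B.1 * A.1) := anticomm h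
  have hm' : B.1 * A.1 = -(A.1 * B.1) := by rw [hm, neg_neg]
  have htrA0 : A.1.trace = 0 := trace_zero_of_anticomm hm
  have htrB0 : B.1.trace = 0 := trace_zero_of_anticomm hm'
  have hAeq : A.1 = !![a, b; -conj' b, conj' a] := SU2_entries A
  have hBeq : B.1 = !![p, q; -conj' q, conj' p] := SU2_entries B
  have htrA : conj' a = -a := by
    rw [hAeq, Matrix.trace_fin_two_of] at htrA0
    linear_combination htrA0
  have htrB : conj' p = -p := by
    rw [hBeq, Matrix.trace_fin_two_of] at htrB0
    linear_combination htrB0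
  have e1 : b * conj' b = 1 + a^2 := by
    have hd := det_one' A
    rw [hAeq, Matrix.det_fin_two_of] at hd
    linear_combination hd - a*htrA
  have e2 : q * conj' q = 1 + p^2 := by
    have hd := det_one' B
    rw [hBeq, Matrix.det_fin_two_of] at hd
    linear_combination hd - p*htrB
  have e3 : 2*a*p = b * conj' q + q * conj' b := by
    have h00 : (A.1 * B.1) 0 0 = (-(B.1 * A.1)) 0 0 := by rw [hm]
    rw [hAeq, hBeq, Matrix.mul_fin_two, Matrix.mul_fin_two] at h00
    simp only [Matrix.neg_apply, Matrix.cons_val', Matrix.cons_val_zero, Matrix.empty_val',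
      Matrix.cons_val_fin_one, Matrix.of_apply] at h00
    linear_combination h00
  have hre : a.re = 0 := by
    have h20 := congrArg Complex.re htrA
    simp only [Complex.conj_re, Complex.neg_re] at h20
    linarith
  set t := a.im with ht_def
  have haI : a = (t:ℝ) * I := by
    apply Complex.ext <;> simp [hre, ht_def]
  have hc22 : 2 - 2*I*a = ((2+2*t : ℝ) : ℂ) := by
    rw [haI]; push_cast
    linear_combination (-2*(t:ℂ))*Complex.I_sq
  have htne : t ≠ -1 := by
    intro h31
    apply hne
    rw [haI, h31]; push_cast; ring
  have ht2 : t^2 ≤ 1 := by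
    have h40 : (Complex.normSq b : ℂ) = ((1 - t^2 : ℝ) : ℂ) := by
      have e1' := e1
      rw [haI] at e1'
      rw [Complex.normSq_eq_conj_mul_self]
      push_cast
      linear_combination e1' + (t:ℂ)^2 * Complex.I_sq
    have h41 : Complex.normSq b = 1 - t^2 := by exact_mod_cast h40
    nlinarith [Complex.normSq_nonneg b]
  have htpos : 0 < 2 + 2*t := by
    have h42 : -1 ≤ t := by nlinarith
    rcases lt_or_eq_of_le h42 with h43 | h43
    · linarith
    · exact absurd h43.symm htne
  have hM : Mm a b p q = Mm a b p q := rfl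
  have hcore1 : star (Mm a b p q) * (Mm a b p q) = (2 - 2*I*a) • 1 := core1 a b p q htrA htrB e1 e2 e3
  have hdetM : (Complex.normSq (Mm a b p q).det : ℂ) = (((2+2*t : ℝ))^2 : ℝ) := by
    have h51 := congrArg Matrix.det hcore1
    rw [Matrix.det_mul, Matrix.star_eq_conjTranspose, Matrix.det_conjTranspose] at h51
    rw [Matrix.det_smul, Matrix.det_one, hc22] at h51
    rw [Complex.normSq_eq_conj_mul_self]
    push_cast
    rw [← Complex.star_def]
    simpa using h51
  have hdetM' : Complex.normSq (Mm a b p q).det = (2+2*t)^2 := by exact_mod_cast hdetM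
  have hdM0 : (Mm a b p q).det ≠ 0 := by
    intro h0
    rw [h0] at hdetM'
    simp at hdetM'
    nlinarith
  obtain ⟨l, hl⟩ := IsAlgClosed.exists_pow_nat_eq (k := ℂ) ((Mm a b p q).det)⁻¹ (n := 2) (by norm_num)
  have hnl : Complex.normSq l = (2+2*t)⁻¹ := by
    have h52 : (Complex.normSq l)^2 = ((2+2*t)⁻¹)^2 := by
      have : Complex.normSq (l^2) = Complex.normSq (((Mm a b p q).det)⁻¹) := by rw [hl]
      rw [map_pow, map_inv₀, hdetM'] at this
      rw [this]; rw [inv_pow]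
    have h54 : Complex.normSq l = Real.sqrt ((Complex.normSq l)^2) :=
      (Real.sqrt_sq (Complex.normSq_nonneg l)).symm
    rw [h54, h52, Real.sqrt_sq (by positivity)]
  have hGU : star (l • Mm a b p q) * (l • Mm a b p q) = 1 := by
    rw [star_smul, Matrix.smul_mul, Matrix.mul_smul, hcore1, smul_smul, smul_smul]
    have hsc : star l * l * (2 - 2*I*a) = 1 := by
      rw [Complex.star_def, ← Complex.normSq_eq_conj_mul_self, hnl, hc22]
      rw [← Complex.ofReal_mul, inv_mul_cancel₀ (ne_of_gt htpos), Complex.ofReal_one]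
    rw [hsc, one_smul]
  have hGdet : (l • Mm a b p q).det = 1 := by
    rw [Matrix.det_smul]
    simp only [Fintype.card_fin]
    rw [hl]
    exact inv_mul_cancel₀ hdM0
  have hGmem : (l • Mm a b p q) ∈ Matrix.specialUnitaryGroup (Fin 2) ℂ :=
    mem_SU2 _ hGU hGdet
  have hA2 : A.1 = !![a, b; -conj' b, -a] := by rw [hAeq, htrA]
  have hB2 : B.1 = !![p, q; -conj' q, -p] := by rw [hBeq, htrB]
  have hAG : A.1 * (l • Mm a b p q) = (l • Mm a b p q) * !![I, 0; 0, -I] := by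
    rw [Matrix.mul_smul, hA2, core2 a b p q e1 e3, Matrix.smul_mul]
  have hBG : B.1 * (l • Mm a b p q) = (l • Mm a b p q) * !![0, -1; 1, 0] := by
    rw [Matrix.mul_smul, hB2, core3 a b p q e2, Matrix.smul_mul]
  refine ⟨(⟨l • Mm a b p q, hGmem⟩ : SU2)⁻¹, ?_, ?_⟩
  · apply Subtype.ext
    have hv : ((⟨l • Mm a b p q, hGmem⟩ : SU2)⁻¹ * A *
        ((⟨l • Mm a b p q, hGmem⟩ : SU2)⁻¹)⁻¹).1
        = star (l • Mm a b p q) * (A.1 * (l • Mm a b p q)) := by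
      simp only [coe_mul, inv_val, star_star, mul_assoc]
    rw [hv, hAG, ← mul_assoc, hGU, one_mul]
    rfl
  · apply Subtype.ext
    have hv : ((⟨l • Mm a b p q, hGmem⟩ : SU2)⁻¹ * B *
        ((⟨l • Mm a b p q, hGmem⟩ : SU2)⁻¹)⁻¹).1
        = star (l • Mm a b p q) * (B.1 * (l • Mm a b p q)) := by
      simp only [coe_mul, inv_val, star_star, mul_assoc]
    rw [hv, hBG, ← mul_assoc, hGU, one_mul]
    rfl

end main

lemma conj_negOne (g : SU2) : g * negOne * g⁻¹ = negOne := by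
  apply Subtype.ext
  rw [coe_mul, coe_mul, inv_val]
  show g.1 * (-1) * star g.1 = (-1 : Matrix (Fin 2) (Fin 2) ℂ)
  rw [mul_neg_one, neg_mul, mul_star_self']

lemma conj_to_std' {A B : SU2} (h : A * B * A⁻¹ * B⁻¹ = negOne) :
    ∃ g : SU2, g * A * g⁻¹ = A0 ∧ g * B * g⁻¹ = B0 := by
  by_cases hne : A.1 0 0 = -I
  · have hrel' : (B0*A*B0⁻¹) * (B0*B*B0⁻¹) * (B0*A*B0⁻¹)⁻¹ * (B0*B*B0⁻¹)⁻¹ = negOne := by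
      have hgp : (B0*A*B0⁻¹) * (B0*B*B0⁻¹) * (B0*A*B0⁻¹)⁻¹ * (B0*B*B0⁻¹)⁻¹
          = B0 * (A*B*A⁻¹*B⁻¹) * B0⁻¹ := by group
      rw [hgp, h, conj_negOne]
    have hne' : (B0*A*B0⁻¹).1 0 0 ≠ -I := by
      have hv : (B0*A*B0⁻¹).1 = B0.1 * A.1 * star B0.1 := by
        rw [coe_mul, coe_mul, inv_val]
      have hAeq := SU2_entries A
      rw [hv, hAeq]
      have hB0v : B0.1 = !![(0:ℂ),-1;1,0] := rfl
      have hent : (B0.1 * !![A.1 0 0, A.1 0 1; -conj' (A.1 0 1), conj' (A.1 0 0)]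
          * star B0.1) 0 0 = conj' (A.1 0 0) := by
        rw [hB0v, star_fin_two, Matrix.mul_fin_two, Matrix.mul_fin_two]
        simp
      rw [hent, hne]
      simp only [map_neg, Complex.conj_I]
      intro hcon
      have : (2:ℂ) * I = 0 := by linear_combination hcon
      simp [Complex.I_ne_zero] at this
    obtain ⟨g, hg1, hg2⟩ := conj_to_std hrel' hne'
    refine ⟨g * B0, ?_, ?_⟩
    · rw [show g * B0 * A * (g * B0)⁻¹ = g * (B0*A*B0⁻¹) * g⁻¹ by group, hg1]
    · rw [show g * B0 * B * (g * B0)⁻¹ = g * (B0*B*B0⁻¹) * g⁻¹ by group, hg2]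
  · exact conj_to_std h hne

lemma rel_A0B0 : A0 * B0 * A0⁻¹ * B0⁻¹ = negOne := by
  apply Subtype.ext
  rw [coe_mul, coe_mul, inv_val, inv_val]
  show !![I,0;0,-I] * !![0,-1;1,0] * star !![I,0;0,-I] * star !![0,-1;1,0]
      = (-1 : Matrix (Fin 2) (Fin 2) ℂ)
  rw [star_fin_two, star_fin_two]
  ext i j
  fin_cases i <;> fin_cases j <;>
    simp [Matrix.mul_apply, Fin.sum_univ_two]


/-- The genus-1 odd character variety
`M₁ = {(A,B) ∈ SU(2)² : ABA⁻¹B⁻¹ = -1} / conjugation` consists of a single point: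
the set of such pairs is nonempty, and any two such pairs are simultaneously conjugate. -/
theorem genus_one_odd_character_variety_single_point :
    (∃ A B : SU2, A * B * A⁻¹ * B⁻¹ = negOne) ∧
    (∀ A B A' B' : SU2, A * B * A⁻¹ * B⁻¹ = negOne → A' * B' * A'⁻¹ * B'⁻¹ = negOne →
      ∃ g : SU2, g * A * g⁻¹ = A' ∧ g * B * g⁻¹ = B') := by
  constructor
  · exact ⟨A0, B0, rel_A0B0⟩
  · intro A B A' B' h h'
    obtain ⟨g1, h1A, h1B⟩ := conj_to_std' h
    obtain ⟨g2, h2A, h2B⟩ := conj_to_std' h'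
    refine ⟨g2⁻¹ * g1, ?_, ?_⟩
    · rw [show A' = g2⁻¹ * (g2 * A' * g2⁻¹) * g2 by group, h2A, ← h1A]
      group
    · rw [show B' = g2⁻¹ * (g2 * B' * g2⁻¹) * g2 by group, h2B, ← h1B]
      group
end

section
/- If A, B ∈ SU(2) satisfy A*B*A⁻¹*B⁻¹ = -1, then the trace of A is 0 and the trace of B is 0. -/
open Matrix Complex

/-- If `A, B ∈ SU(2)` satisfy `ABA⁻¹B⁻¹ = -1`, then `A` and `B` are both traceless. -/
theorem trace_eq_zero_of_commutator_negOne
    (A B : SU2) (h : A * B * A⁻¹ * B⁻¹ = negOne) :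
    Matrix.trace (A : Matrix (Fin 2) (Fin 2) ℂ) = 0 ∧
      Matrix.trace (B : Matrix (Fin 2) (Fin 2) ℂ) = 0 := by
  have hgrp : A * B = negOne * (B * A) := by
    rw [← h]; group
  have hm : (A : Matrix (Fin 2) (Fin 2) ℂ) * B = -((B : Matrix (Fin 2) (Fin 2) ℂ) * A) := by
    have := Subtype.ext_iff.mp hgrp
    simpa [negOne, neg_mul] using this
  set a := (A : Matrix (Fin 2) (Fin 2) ℂ)
  set b := (B : Matrix (Fin 2) (Fin 2) ℂ)
  have ha : a * star a = 1 := (Matrix.mem_specialUnitaryGroup_iff.mp A.2).1.2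
  have hb : b * star b = 1 := (Matrix.mem_specialUnitaryGroup_iff.mp B.2).1.2
  have ha' : star a * a = 1 := (Matrix.mem_specialUnitaryGroup_iff.mp A.2).1.1
  have hb' : star b * b = 1 := (Matrix.mem_specialUnitaryGroup_iff.mp B.2).1.1
  constructor
  · have : a = -(b * a * star b) := by
      calc a = a * (b * star b) := by rw [hb, mul_one]
        _ = (a * b) * star b := by rw [mul_assoc]
        _ = -(b * a * star b) := by rw [hm, neg_mul]
    have ht := congrArg Matrix.trace this
    rw [Matrix.trace_neg, Matrix.trace_mul_cycle, hb', one_mul] at ht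
    linear_combination ht / 2
  · have : b = -(star a * b * a) := by
      calc b = star a * a * b := by rw [ha', one_mul]
        _ = star a * (a * b) := by rw [mul_assoc]
        _ = -(star a * b * a) := by rw [hm, mul_neg, mul_assoc]
    have ht := congrArg Matrix.trace this
    rw [Matrix.trace_neg, Matrix.trace_mul_cycle, ha, one_mul] at ht
    linear_combination ht / 2
end

section
/- Let g ≥ 1 and let (A₁,...,A_g, B₁,...,B_g) ∈ SU(2)^{2g} satisfy ∏_{i=1}^{g} A_i*B_i*A_i⁻¹*B_i⁻¹ = -1. If an element h ∈ SU(2) commutes with every A_i and with every B_i, then h = 1 or h = -1. (Every point of the representation variety R_g is an irreducible representation, so the stabilizer of the simultaneous conjugation action at every point of R_g is exactly the center {±1}; this underlies the smoothness of the odd character variety M_g.) -/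
open Matrix Complex


lemma cent_comm (M X Y : Matrix (Fin 2) (Fin 2) ℂ)
    (hns : M 0 1 ≠ 0 ∨ M 1 0 ≠ 0 ∨ M 0 0 ≠ M 1 1)
    (hX : M * X = X * M) (hY : M * Y = Y * M) : X * Y = Y * X := by
  have EX : ∀ i j, (M * X) i j = (X * M) i j := fun i j => by rw [hX]
  have EY : ∀ i j, (M * Y) i j = (Y * M) i j := fun i j => by rw [hY]
  simp only [Matrix.mul_apply, Fin.sum_univ_two] at EX EY
  have E1 := EX 0 0; have E2 := EX 0 1; have E3 := EX 1 0; have E4 := EX 1 1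
  have F1 := EY 0 0; have F2 := EY 0 1; have F3 := EY 1 0; have F4 := EY 1 1
  rcases hns with hb | hc | had
  · -- b ≠ 0
    have G00 : X 0 0 * Y 0 0 + X 0 1 * Y 1 0 = Y 0 0 * X 0 0 + Y 0 1 * X 1 0 := by
      apply mul_left_cancel₀ hb
      linear_combination X 0 1 * F1 - Y 0 1 * E1
    have G01 : X 0 0 * Y 0 1 + X 0 1 * Y 1 1 = Y 0 0 * X 0 1 + Y 0 1 * X 1 1 := by
      apply mul_left_cancel₀ hb
      linear_combination X 0 1 * F2 - Y 0 1 * E2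
    have G10 : X 1 0 * Y 0 0 + X 1 1 * Y 1 0 = Y 1 0 * X 0 0 + Y 1 1 * X 1 0 := by
      apply mul_left_cancel₀ hb
      linear_combination (Y 0 0 - Y 1 1) * E1 + (X 1 1 - X 0 0) * F1 - M 1 0 * G01
    have G11 : X 1 0 * Y 0 1 + X 1 1 * Y 1 1 = Y 1 0 * X 0 1 + Y 1 1 * X 1 1 := by
      apply mul_left_cancel₀ hb
      linear_combination Y 0 1 * E1 - X 0 1 * F1
    ext i j
    fin_cases i <;> fin_cases j <;>
      simp only [Matrix.mul_apply, Fin.sum_univ_two] <;>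
      first | exact G00 | exact G01 | exact G10 | exact G11
  · -- c ≠ 0
    have G10 : X 1 0 * Y 0 0 + X 1 1 * Y 1 0 = Y 1 0 * X 0 0 + Y 1 1 * X 1 0 := by
      apply mul_left_cancel₀ hc
      linear_combination X 1 0 * F3 - Y 1 0 * E3
    have G00 : X 0 0 * Y 0 0 + X 0 1 * Y 1 0 = Y 0 0 * X 0 0 + Y 0 1 * X 1 0 := by
      apply mul_left_cancel₀ hc
      linear_combination Y 1 0 * E4 - X 1 0 * F4
    have G11 : X 1 0 * Y 0 1 + X 1 1 * Y 1 1 = Y 1 0 * X 0 1 + Y 1 1 * X 1 1 := by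
      apply mul_left_cancel₀ hc
      linear_combination X 1 0 * F4 - Y 1 0 * E4
    have G01 : X 0 0 * Y 0 1 + X 0 1 * Y 1 1 = Y 0 0 * X 0 1 + Y 0 1 * X 1 1 := by
      apply mul_left_cancel₀ hc
      linear_combination (Y 1 1 - Y 0 0) * E4 + (X 0 0 - X 1 1) * F4 - M 0 1 * G10
    ext i j
    fin_cases i <;> fin_cases j <;>
      simp only [Matrix.mul_apply, Fin.sum_univ_two] <;>
      first | exact G00 | exact G01 | exact G10 | exact G11
  · -- a ≠ d; then b = 0 or c = 0 cases handled above, so here assume b = 0 ∧ c = 0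
    by_cases hb : M 0 1 ≠ 0
    · -- reuse b ≠ 0 argument
      have G00 : X 0 0 * Y 0 0 + X 0 1 * Y 1 0 = Y 0 0 * X 0 0 + Y 0 1 * X 1 0 := by
        apply mul_left_cancel₀ hb
        linear_combination X 0 1 * F1 - Y 0 1 * E1
      have G01 : X 0 0 * Y 0 1 + X 0 1 * Y 1 1 = Y 0 0 * X 0 1 + Y 0 1 * X 1 1 := by
        apply mul_left_cancel₀ hb
        linear_combination X 0 1 * F2 - Y 0 1 * E2
      have G10 : X 1 0 * Y 0 0 + X 1 1 * Y 1 0 = Y 1 0 * X 0 0 + Y 1 1 * X 1 0 := by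
        apply mul_left_cancel₀ hb
        linear_combination (Y 0 0 - Y 1 1) * E1 + (X 1 1 - X 0 0) * F1 - M 1 0 * G01
      have G11 : X 1 0 * Y 0 1 + X 1 1 * Y 1 1 = Y 1 0 * X 0 1 + Y 1 1 * X 1 1 := by
        apply mul_left_cancel₀ hb
        linear_combination Y 0 1 * E1 - X 0 1 * F1
      ext i j
      fin_cases i <;> fin_cases j <;>
        simp only [Matrix.mul_apply, Fin.sum_univ_two] <;>
        first | exact G00 | exact G01 | exact G10 | exact G11
    push_neg at hb
    by_cases hc : M 1 0 ≠ 0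
    · have G10 : X 1 0 * Y 0 0 + X 1 1 * Y 1 0 = Y 1 0 * X 0 0 + Y 1 1 * X 1 0 := by
        apply mul_left_cancel₀ hc
        linear_combination X 1 0 * F3 - Y 1 0 * E3
      have G00 : X 0 0 * Y 0 0 + X 0 1 * Y 1 0 = Y 0 0 * X 0 0 + Y 0 1 * X 1 0 := by
        apply mul_left_cancel₀ hc
        linear_combination Y 1 0 * E4 - X 1 0 * F4
      have G11 : X 1 0 * Y 0 1 + X 1 1 * Y 1 1 = Y 1 0 * X 0 1 + Y 1 1 * X 1 1 := by
        apply mul_left_cancel₀ hc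
        linear_combination X 1 0 * F4 - Y 1 0 * E4
      have G01 : X 0 0 * Y 0 1 + X 0 1 * Y 1 1 = Y 0 0 * X 0 1 + Y 0 1 * X 1 1 := by
        apply mul_left_cancel₀ hc
        linear_combination (Y 1 1 - Y 0 0) * E4 + (X 0 0 - X 1 1) * F4 - M 0 1 * G10
      ext i j
      fin_cases i <;> fin_cases j <;>
        simp only [Matrix.mul_apply, Fin.sum_univ_two] <;>
        first | exact G00 | exact G01 | exact G10 | exact G11
    push_neg at hc
    have hq : X 0 1 = 0 := by
      have h1 : X 0 1 * (M 0 0 - M 1 1) = 0 := by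
        linear_combination E2 - (X 1 1 - X 0 0) * hb
      exact (mul_eq_zero.mp h1).resolve_right (sub_ne_zero.mpr had)
    have hr : X 1 0 = 0 := by
      have h1 : X 1 0 * (M 1 1 - M 0 0) = 0 := by
        linear_combination E3 - (X 0 0 - X 1 1) * hc
      exact (mul_eq_zero.mp h1).resolve_right (sub_ne_zero.mpr (Ne.symm had))
    have hu : Y 0 1 = 0 := by
      have h1 : Y 0 1 * (M 0 0 - M 1 1) = 0 := by
        linear_combination F2 - (Y 1 1 - Y 0 0) * hb
      exact (mul_eq_zero.mp h1).resolve_right (sub_ne_zero.mpr had)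
    have hv : Y 1 0 = 0 := by
      have h1 : Y 1 0 * (M 1 1 - M 0 0) = 0 := by
        linear_combination F3 - (Y 0 0 - Y 1 1) * hc
      exact (mul_eq_zero.mp h1).resolve_right (sub_ne_zero.mpr (Ne.symm had))
    have G00 : X 0 0 * Y 0 0 + X 0 1 * Y 1 0 = Y 0 0 * X 0 0 + Y 0 1 * X 1 0 := by
      linear_combination Y 1 0 * hq - Y 0 1 * hr
    have G01 : X 0 0 * Y 0 1 + X 0 1 * Y 1 1 = Y 0 0 * X 0 1 + Y 0 1 * X 1 1 := by
      linear_combination (X 0 0 - X 1 1) * hu + (Y 1 1 - Y 0 0) * hq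
    have G10 : X 1 0 * Y 0 0 + X 1 1 * Y 1 0 = Y 1 0 * X 0 0 + Y 1 1 * X 1 0 := by
      linear_combination (Y 0 0 - Y 1 1) * hr + (X 1 1 - X 0 0) * hv
    have G11 : X 1 0 * Y 0 1 + X 1 1 * Y 1 1 = Y 1 0 * X 0 1 + Y 1 1 * X 1 1 := by
      linear_combination X 1 0 * hu - X 0 1 * hv
    ext i j
    fin_cases i <;> fin_cases j <;>
      simp only [Matrix.mul_apply, Fin.sum_univ_two] <;>
      first | exact G00 | exact G01 | exact G10 | exact G11


/-- Every point of the genus-`g` representation variety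
`R_g = {(A₁,…,A_g,B₁,…,B_g) ∈ SU(2)^{2g} : ∏ᵢ AᵢBᵢAᵢ⁻¹Bᵢ⁻¹ = -1}` is an irreducible
representation: any `h ∈ SU(2)` commuting with all of the `Aᵢ` and `Bᵢ` is `±1`.
(The stabilizer of the conjugation action at every point of `R_g` is the center.) -/
theorem stabilizer_of_representation_variety_point_is_center
    (g : ℕ) (hg : 1 ≤ g) (A B : Fin g → SU2)
    (h : (List.ofFn (fun i => A i * B i * (A i)⁻¹ * (B i)⁻¹)).prod = negOne)
    (h' : SU2)
    (hcomm : ∀ i : Fin g, h' * A i = A i * h' ∧ h' * B i = B i * h') :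
    h' = 1 ∨ h' = negOne := by
  by_contra hcon
  push_neg at hcon
  obtain ⟨hn1, hn2⟩ := hcon
  have hns : (h'.1) 0 1 ≠ 0 ∨ (h'.1) 1 0 ≠ 0 ∨ (h'.1) 0 0 ≠ (h'.1) 1 1 := by
    by_contra hns
    push_neg at hns
    obtain ⟨hb, hc, hd⟩ := hns
    have hdet : h'.1.det = 1 := (Matrix.mem_specialUnitaryGroup_iff.mp h'.2).2
    rw [Matrix.det_fin_two] at hdet
    have ha : (h'.1 0 0 - 1) * (h'.1 0 0 + 1) = 0 := by
      linear_combination hdet + h'.1 0 0 * hd + h'.1 1 0 * hb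
    have hM : h'.1 = h'.1 0 0 • (1 : Matrix (Fin 2) (Fin 2) ℂ) := by
      ext i j
      fin_cases i <;> fin_cases j <;>
        simp [Matrix.one_apply, hb, hc, ← hd]
    rcases mul_eq_zero.mp ha with h0 | h0
    · exact hn1 (Subtype.ext (by rw [hM, sub_eq_zero.mp h0, one_smul]; rfl))
    · have : h'.1 0 0 = -1 := eq_neg_of_add_eq_zero_left h0
      exact hn2 (Subtype.ext (by rw [hM, this, neg_smul, one_smul]; rfl))
  have hAB : ∀ i, A i * B i = B i * A i := fun i =>
    Subtype.ext (cent_comm h'.1 (A i).1 (B i).1 hns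
      (congrArg Subtype.val (hcomm i).1) (congrArg Subtype.val (hcomm i).2))
  have hone : (List.ofFn (fun i => A i * B i * (A i)⁻¹ * (B i)⁻¹)).prod = 1 := by
    apply List.prod_eq_one
    intro x hx
    simp only [List.mem_ofFn] at hx
    obtain ⟨i, rfl⟩ := hx
    show A i * B i * (A i)⁻¹ * (B i)⁻¹ = 1
    rw [hAB i]
    group
  have hbad : (1 : SU2) = negOne := hone.symm.trans h
  have hbad2 : (1 : Matrix (Fin 2) (Fin 2) ℂ) = -1 := congrArg Subtype.val hbad
  have := congrFun (congrFun hbad2 0) 0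
  have h10 : (1 : ℂ) = -1 := this
  norm_num at h10
end

section
/- Fix integers n ≥ 1, g ≥ 1, and d with gcd(n, d) = 1, and let ζ = exp(2πi/n) ∈ ℂ. Suppose A₁,...,A_g, B₁,...,B_g ∈ SU(n) satisfy ∏_{i=1}^{g} A_i*B_i*A_i⁻¹*B_i⁻¹ = ζ^d·1. Then: (i) there is no ℂ-subspace W of ℂⁿ with 0 ≠ W ≠ ℂⁿ that is invariant under multiplication by every A_i and every B_i (the tuple is an irreducible representation); and (ii) every unitary n×n matrix commuting with every A_i and every B_i is a scalar matrix. (This irreducibility is the algebraic fact underlying the smoothness of the moduli space M_g^{n,d} when n and d are coprime.) -/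
open Matrix Complex

/-- `SUn n` is the special unitary group of `n × n` complex matrices of determinant 1. -/
abbrev SUn (n : ℕ) := Matrix.specialUnitaryGroup (Fin n) ℂ

/-- The primitive `n`-th root of unity `ζ = exp(2πi/n)`. -/
noncomputable def zeta (n : ℕ) : ℂ := Complex.exp (2 * (Real.pi : ℂ) * Complex.I / n)

/-- If a submodule is invariant under an invertible matrix (with a two-sided inverse `N`),
it is invariant under the inverse as well. -/
lemma inv_preserves {n : ℕ} (M N : Matrix (Fin n) (Fin n) ℂ) (hNM : N * M = 1)
    (W : Submodule ℂ (Fin n → ℂ)) (hW : ∀ x ∈ W, M.mulVec x ∈ W) :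
    ∀ x ∈ W, N.mulVec x ∈ W := by
  have hW' : ∀ x ∈ W, M.mulVecLin x ∈ W := by simpa using hW
  have hNMv : ∀ v : Fin n → ℂ, N.mulVec (M.mulVec v) = v := by
    intro v
    rw [Matrix.mulVec_mulVec, hNM, Matrix.one_mulVec]
  have hinj : Function.Injective (M.mulVecLin.restrict hW') := by
    intro x y hxy
    have : M.mulVec (x : Fin n → ℂ) = M.mulVec (y : Fin n → ℂ) := congrArg Subtype.val hxy
    have := congrArg (N.mulVec) this
    rw [hNMv, hNMv] at this
    exact Subtype.ext this
  have hsurj : Function.Surjective (M.mulVecLin.restrict hW') :=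
    (LinearMap.injective_iff_surjective (f := M.mulVecLin.restrict hW')).mp hinj
  intro x hx
  obtain ⟨y, hy⟩ := hsurj ⟨x, hx⟩
  have hyx : M.mulVec (y : Fin n → ℂ) = x := congrArg Subtype.val hy
  have : N.mulVec x = (y : Fin n → ℂ) := by rw [← hyx, hNMv]
  rw [this]
  exact y.2

/-- If `gcd(n,d) = 1` and `(A₁,…,A_g,B₁,…,B_g) ∈ SU(n)^{2g}` satisfies
`∏ᵢ AᵢBᵢAᵢ⁻¹Bᵢ⁻¹ = ζ^d·1` with `ζ = exp(2πi/n)`, then the tuple is irreducible: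
(i) there is no nonzero proper subspace of `ℂⁿ` invariant under all `Aᵢ` and `Bᵢ`; and
(ii) every unitary matrix commuting with all `Aᵢ` and `Bᵢ` is a scalar matrix. -/
theorem coprime_determinant_tuple_irreducible
    (n g : ℕ) (hn : 1 ≤ n) (hg : 1 ≤ g) (d : ℤ) (hcop : Int.gcd (n : ℤ) d = 1)
    (A B : Fin g → SUn n)
    (h : (((List.ofFn (fun i => A i * B i * (A i)⁻¹ * (B i)⁻¹)).prod : SUn n) :
        Matrix (Fin n) (Fin n) ℂ) = zeta n ^ d • (1 : Matrix (Fin n) (Fin n) ℂ)) :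
    (¬ ∃ W : Submodule ℂ (Fin n → ℂ), W ≠ ⊥ ∧ W ≠ ⊤ ∧
      ∀ i : Fin g, ∀ x ∈ W,
        (A i : Matrix (Fin n) (Fin n) ℂ).mulVec x ∈ W ∧
        (B i : Matrix (Fin n) (Fin n) ℂ).mulVec x ∈ W) ∧
    (∀ M : Matrix (Fin n) (Fin n) ℂ, M ∈ Matrix.unitaryGroup (Fin n) ℂ →
      (∀ i : Fin g, M * (A i : Matrix (Fin n) (Fin n) ℂ) = (A i : Matrix (Fin n) (Fin n) ℂ) * M ∧
        M * (B i : Matrix (Fin n) (Fin n) ℂ) = (B i : Matrix (Fin n) (Fin n) ℂ) * M) →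
      ∃ c : ℂ, M = c • (1 : Matrix (Fin n) (Fin n) ℂ)) := by
  classical
  have hn0 : n ≠ 0 := by omega
  have hprim : IsPrimitiveRoot (zeta n) n := Complex.isPrimitiveRoot_exp n hn0
  -- The core claim: any invariant subspace is ⊥ or ⊤.
  have key : ∀ W : Submodule ℂ (Fin n → ℂ),
      (∀ i : Fin g, ∀ x ∈ W,
        (A i : Matrix (Fin n) (Fin n) ℂ).mulVec x ∈ W ∧
        (B i : Matrix (Fin n) (Fin n) ℂ).mulVec x ∈ W) →
      W = ⊥ ∨ W = ⊤ := by
    intro W hW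
    by_contra hc
    push_neg at hc
    obtain ⟨hbot, htop⟩ := hc
    -- The subgroup of SU(n) preserving W
    let H : Subgroup (SUn n) :=
      { carrier := {u : SUn n | ∀ x ∈ W, (u : Matrix (Fin n) (Fin n) ℂ).mulVec x ∈ W}
        mul_mem' := by
          intro u v hu hv x hx
          have : ((u * v : SUn n) : Matrix (Fin n) (Fin n) ℂ).mulVec x
              = (u : Matrix (Fin n) (Fin n) ℂ).mulVec
                  ((v : Matrix (Fin n) (Fin n) ℂ).mulVec x) := by
            rw [Matrix.mulVec_mulVec]; rfl
          rw [this]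
          exact hu _ (hv _ hx)
        one_mem' := by
          intro x hx
          simpa [Matrix.one_mulVec] using hx
        inv_mem' := by
          intro u hu
          have hstar : ((u⁻¹ : SUn n) : Matrix (Fin n) (Fin n) ℂ)
              = star (u : Matrix (Fin n) (Fin n) ℂ) := rfl
          intro x hx
          rw [hstar]
          refine inv_preserves (u : Matrix (Fin n) (Fin n) ℂ)
            (star (u : Matrix (Fin n) (Fin n) ℂ)) ?_ W hu x hx
          exact (Matrix.mem_unitaryGroup_iff'.mp
            ((Matrix.mem_specialUnitaryGroup_iff.mp u.2).1)).symm ▸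
              (Unitary.star_mul_self_of_mem (Matrix.mem_specialUnitaryGroup_iff.mp u.2).1) }
    -- membership lemmas
    have hAmem : ∀ i, A i ∈ H := fun i x hx => (hW i x hx).1
    have hBmem : ∀ i, B i ∈ H := fun i x hx => (hW i x hx).2
    have hres : ∀ u : H, ∀ x ∈ W,
        ((u : SUn n) : Matrix (Fin n) (Fin n) ℂ).mulVecLin x ∈ W := by
      intro u x hx
      simpa using u.2 x hx
    -- determinant of restriction, as a monoid hom H →* ℂ
    let φ : H →* ℂ :=
      { toFun := fun u => LinearMap.det
          ((((u : SUn n) : Matrix (Fin n) (Fin n) ℂ).mulVecLin).restrict (hres u))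
        map_one' := by
          show LinearMap.det
            (((((1 : H) : SUn n) : Matrix (Fin n) (Fin n) ℂ).mulVecLin).restrict (hres 1)) = 1
          have : ((((1 : H) : SUn n) : Matrix (Fin n) (Fin n) ℂ).mulVecLin).restrict
              (hres 1) = LinearMap.id := by
            refine LinearMap.ext fun x => Subtype.ext ?_
            simp [LinearMap.restrict_apply, Matrix.one_mulVec]
          rw [this, LinearMap.det_id]
        map_mul' := by
          intro u v
          show LinearMap.det _ = LinearMap.det _ * LinearMap.det _
          have : ((((u * v : H) : SUn n) : Matrix (Fin n) (Fin n) ℂ).mulVecLin).restrict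
              (hres (u * v))
              = (((((u : SUn n) : Matrix (Fin n) (Fin n) ℂ).mulVecLin).restrict (hres u)).comp
                ((((v : SUn n) : Matrix (Fin n) (Fin n) ℂ).mulVecLin).restrict (hres v))) := by
            refine LinearMap.ext fun x => Subtype.ext ?_
            simp only [LinearMap.restrict_apply, LinearMap.coe_comp, Function.comp_apply,
              Matrix.mulVecLin_apply]
            rw [show (((u * v : H) : SUn n) : Matrix (Fin n) (Fin n) ℂ)
              = ((u : SUn n) : Matrix (Fin n) (Fin n) ℂ)
                * ((v : SUn n) : Matrix (Fin n) (Fin n) ℂ) from rfl,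
              ← Matrix.mulVec_mulVec]
          rw [this, LinearMap.det_comp] }
    have hφinv : ∀ u : H, φ u * φ u⁻¹ = 1 := by
      intro u
      rw [← _root_.map_mul, mul_inv_cancel, _root_.map_one]
    -- the list of commutators in H
    let Lh : List H := List.ofFn (fun i =>
      (⟨A i, hAmem i⟩ : H) * ⟨B i, hBmem i⟩ * (⟨A i, hAmem i⟩ : H)⁻¹ * (⟨B i, hBmem i⟩ : H)⁻¹)
    have hLco : ((Lh.prod : H) : SUn n)
        = (List.ofFn (fun i => A i * B i * (A i)⁻¹ * (B i)⁻¹)).prod := by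
      rw [show ((Lh.prod : H) : SUn n) = H.subtype Lh.prod from rfl, map_list_prod]
      congr 1
      simp only [Lh, List.map_ofFn]
      rfl
    -- φ of each commutator is 1
    have hφcomm : ∀ i : Fin g, φ ((⟨A i, hAmem i⟩ : H) * ⟨B i, hBmem i⟩
        * (⟨A i, hAmem i⟩ : H)⁻¹ * (⟨B i, hBmem i⟩ : H)⁻¹) = 1 := by
      intro i
      rw [_root_.map_mul, _root_.map_mul, _root_.map_mul]
      have := hφinv (⟨A i, hAmem i⟩ : H)
      have h2 := hφinv (⟨B i, hBmem i⟩ : H)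
      calc φ (⟨A i, hAmem i⟩ : H) * φ (⟨B i, hBmem i⟩ : H) * φ (⟨A i, hAmem i⟩ : H)⁻¹
            * φ (⟨B i, hBmem i⟩ : H)⁻¹
          = (φ (⟨A i, hAmem i⟩ : H) * φ (⟨A i, hAmem i⟩ : H)⁻¹)
            * (φ (⟨B i, hBmem i⟩ : H) * φ (⟨B i, hBmem i⟩ : H)⁻¹) := by ring
        _ = 1 := by rw [this, h2, one_mul]
    have hφprod : φ Lh.prod = 1 := by
      rw [map_list_prod]
      refine List.prod_eq_one ?_
      intro x hx
      simp only [Lh, List.map_ofFn, List.mem_ofFn] at hx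
      obtain ⟨i, rfl⟩ := hx
      exact hφcomm i
    -- on the other hand, φ Lh.prod = ζ^(d · finrank W)
    set k := Module.finrank ℂ W with hk
    have hmat : (((Lh.prod : H) : SUn n) : Matrix (Fin n) (Fin n) ℂ)
        = zeta n ^ d • (1 : Matrix (Fin n) (Fin n) ℂ) := by rw [hLco]; exact h
    have hres2 : ∀ x ∈ W, (zeta n ^ d • LinearMap.id : (Fin n → ℂ) →ₗ[ℂ] (Fin n → ℂ)) x ∈ W := by
      intro x hx
      simpa using W.smul_mem (zeta n ^ d) hx
    have hrestr_eq : ((((Lh.prod : H) : SUn n) : Matrix (Fin n) (Fin n) ℂ).mulVecLin).restrict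
        (hres Lh.prod)
        = (zeta n ^ d • LinearMap.id : (Fin n → ℂ) →ₗ[ℂ] (Fin n → ℂ)).restrict hres2 := by
      refine LinearMap.ext fun x => Subtype.ext ?_
      simp only [LinearMap.restrict_apply, Matrix.mulVecLin_apply, hmat]
      simp [Matrix.smul_mulVec, Matrix.one_mulVec]
    have hrestr_smul : (zeta n ^ d • LinearMap.id :
        (Fin n → ℂ) →ₗ[ℂ] (Fin n → ℂ)).restrict hres2
        = (zeta n ^ d) • (LinearMap.id : W →ₗ[ℂ] W) := by
      refine LinearMap.ext fun x => Subtype.ext ?_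
      simp [LinearMap.restrict_apply]
    have hφval : φ Lh.prod = (zeta n ^ d) ^ k := by
      show LinearMap.det _ = _
      rw [hrestr_eq, hrestr_smul, LinearMap.det_smul, LinearMap.det_id, mul_one]
    have hone : (zeta n ^ d) ^ k = 1 := by rw [← hφval, hφprod]
    -- conclude n ∣ d * k
    have hzpow : zeta n ^ (d * (k : ℤ)) = 1 := by
      rw [_root_.zpow_mul, zpow_natCast]; exact hone
    have hdvd : (n : ℤ) ∣ d * (k : ℤ) := (hprim.zpow_eq_one_iff_dvd _).mp hzpow
    have hdvdk : (n : ℤ) ∣ (k : ℤ) := Int.dvd_of_dvd_mul_right_of_gcd_one hdvd hcop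
    have hdvdk' : n ∣ k := Int.ofNat_dvd.mp hdvdk
    have hkpos : 0 < k := by
      haveI : Nontrivial W := Submodule.nontrivial_iff_ne_bot.mpr hbot
      rw [hk]
      exact Module.finrank_pos_iff.mpr this
    have hklt : k < n := by
      have := Submodule.finrank_lt (K := ℂ) (V := Fin n → ℂ) htop
      simpa using this
    exact absurd (Nat.le_of_dvd hkpos hdvdk') (not_le.mpr hklt)
  constructor
  · rintro ⟨W, hbot, htop, hW⟩
    rcases key W hW with h' | h' <;> [exact hbot h'; exact htop h']
  · intro M _ hcomm
    haveI : Nonempty (Fin n) := ⟨⟨0, hn⟩⟩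
    obtain ⟨μ, hμ⟩ := Module.End.exists_eigenvalue (M.mulVecLin : Module.End ℂ (Fin n → ℂ))
    set E := Module.End.eigenspace (M.mulVecLin : Module.End ℂ (Fin n → ℂ)) μ with hE
    have hEbot : E ≠ ⊥ := hμ
    have hinv : ∀ i : Fin g, ∀ x ∈ E,
        (A i : Matrix (Fin n) (Fin n) ℂ).mulVec x ∈ E ∧
        (B i : Matrix (Fin n) (Fin n) ℂ).mulVec x ∈ E := by
      intro i x hx
      have hx' : M.mulVec x = μ • x := Module.End.mem_eigenspace_iff.mp hx
      constructor
      · refine Module.End.mem_eigenspace_iff.mpr ?_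
        show M.mulVec ((A i : Matrix (Fin n) (Fin n) ℂ).mulVec x) = _
        rw [Matrix.mulVec_mulVec, (hcomm i).1, ← Matrix.mulVec_mulVec, hx',
          Matrix.mulVec_smul]
      · refine Module.End.mem_eigenspace_iff.mpr ?_
        show M.mulVec ((B i : Matrix (Fin n) (Fin n) ℂ).mulVec x) = _
        rw [Matrix.mulVec_mulVec, (hcomm i).2, ← Matrix.mulVec_mulVec, hx',
          Matrix.mulVec_smul]
    have hEtop : E = ⊤ := by
      rcases key E hinv with h' | h'
      · exact absurd h' hEbot
      · exact h'
    have hall : ∀ x : Fin n → ℂ, M.mulVec x = μ • x := by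
      intro x
      have : x ∈ E := hEtop ▸ Submodule.mem_top
      exact Module.End.mem_eigenspace_iff.mp this
    refine ⟨μ, Matrix.ext fun i j => ?_⟩
    have h1 := congrFun (hall (Pi.single j 1)) i
    simp only [Matrix.mulVec_single, mul_one, Pi.smul_apply, Pi.single_apply,
      smul_eq_mul, MulOpposite.op_one, one_smul, Matrix.col_apply] at h1
    simp only [Matrix.smul_apply, Matrix.one_apply, smul_eq_mul]
    rw [h1]
end
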